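/- Let α ≤ β ≤ γ be integers, let p_1, …, p_n : {β, …, γ−1} → B(X) and q : {β, …, γ−1} → X be arbitrary, and for i = 1,…,n let τ_i : {β, …, γ−1} → ℤ satisfy α ≤ τ_i(t) ≤ t. For each ζ ∈ {β, …, γ}, define the principal solution 𝒳(·,ζ) : {α, …, γ} → B(X) by: 𝒳(t,ζ) = 0 for α ≤ t < ζ, 𝒳(ζ,ζ) = id_X, and 𝒳(t+1,ζ) = 𝒳(t,ζ) + Σ_{i=1}^{n} p_i(t) ∘ 𝒳(τ_i(t),ζ) for ζ ≤ t ≤ γ−1. If x : {α, …, γ} → X satisfies x(t) = φ(t) for t ∈ {α, …, β} and x(t+1) − x(t) = Σ_{i=1}^{n} p_i(t) x(τ_i(t)) + q(t) for β ≤ t ≤ γ−1, then for all t ∈ {β, …, γ}: x(t) = 𝒳(t,β) φ(β) + Σ_{s=β}^{t−1} 𝒳(t,s+1) q(s) + Σ_{s=β}^{t−1} 𝒳(t,s+1) ( Σ_{i=1}^{n} [τ_i(s) < β] · p_i(s) φ(τ_i(s)) ), where [τ_i(s) < β] equals 1 if τ_i(s) < β and 0 otherwise. -/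

import Mathlib

open Set

/-- Variation of parameters (solution representation) formula for linear delay
equations on the integer time scale, where `σ(s) = s + 1` and the delta
derivative is the forward difference. -/
theorem discrete_linear_delay_variation_of_parameters
    {X : Type*} [NormedAddCommGroup X] [NormedSpace ℝ X] [CompleteSpace X]
    {n : ℕ} (hn : 0 < n)
    {α β γ : ℤ} (hαβ : α ≤ β) (hβγ : β ≤ γ)
    (τ : Fin n → ℤ → ℤ)
    (hτ : ∀ i, ∀ t ∈ Icc β (γ - 1), α ≤ τ i t ∧ τ i t ≤ t)
    (φ : ℤ → X)
    (p : Fin n → ℤ → X →L[ℝ] X) (q : ℤ → X)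
    -- the principal solution `𝒳(t, ζ) = XX t ζ`
    (XX : ℤ → ℤ → X →L[ℝ] X)
    (hXX0 : ∀ ζ ∈ Icc β γ, ∀ t ∈ Ico α ζ, XX t ζ = 0)
    (hXXinit : ∀ ζ ∈ Icc β γ, XX ζ ζ = ContinuousLinearMap.id ℝ X)
    (hXXrec : ∀ ζ ∈ Icc β γ, ∀ t ∈ Icc ζ (γ - 1),
      XX (t + 1) ζ = XX t ζ + ∑ i, (p i t).comp (XX (τ i t) ζ))
    -- the solution of the discrete linear delay initial value problem
    (x : ℤ → X)
    (hxφ : ∀ t ∈ Icc α β, x t = φ t)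
    (hx : ∀ t ∈ Icc β (γ - 1),
      x (t + 1) - x t = ∑ i, p i t (x (τ i t)) + q t) :
    ∀ t ∈ Icc β γ,
      x t = XX t β (φ β) + (∑ s ∈ Finset.Ico β t, XX t (s + 1) (q s)) +
        ∑ s ∈ Finset.Ico β t, XX t (s + 1)
          (∑ i, if τ i s < β then p i s (φ (τ i s)) else 0) := by
  set W : ℤ → X := fun s => ∑ i, if τ i s < β then p i s (φ (τ i s)) else 0 with hW
  suffices H : ∀ m, β ≤ m →
      (m ≤ γ → ∀ t, β ≤ t → t ≤ m →
      x t = XX t β (φ β) + (∑ s ∈ Finset.Ico β t, XX t (s + 1) (q s)) +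
        ∑ s ∈ Finset.Ico β t, XX t (s + 1) (W s)) by
    intro t ht
    exact H t ht.1 ht.2 t ht.1 le_rfl
  intro m hm
  refine Int.le_induction (motive := fun m _ => m ≤ γ → ∀ t, β ≤ t → t ≤ m →
      x t = XX t β (φ β) + (∑ s ∈ Finset.Ico β t, XX t (s + 1) (q s)) +
        ∑ s ∈ Finset.Ico β t, XX t (s + 1) (W s)) ?_ ?_ m hm
  · -- base case m = β
    intro _ t htβ htm
    have ht : t = β := le_antisymm htm htβ
    rw [ht]
    simp [hXXinit β ⟨le_rfl, hβγ⟩, hxφ β ⟨hαβ, le_rfl⟩]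
  · -- inductive step
    intro m hβm IH hmγ t htβ htm
    have hmγ' : m ≤ γ := by omega
    rcases lt_or_eq_of_le htm with h | h
    · exact IH hmγ' t htβ (by omega)
    subst h
    have hmI : m ∈ Icc β (γ - 1) := ⟨hβm, by omega⟩
    -- the step of the solution
    have hstep : x (m + 1) = x m + (∑ i, p i m (x (τ i m)) + q m) := by
      have h := hx m hmI
      have h' : x (m + 1) - x m + x m = (∑ i, p i m (x (τ i m)) + q m) + x m := by
        rw [h]
      simpa [sub_add_cancel, add_comm] using h'
    -- per-i key identity
    have key : ∀ i : Fin n, p i m (x (τ i m)) =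
        p i m (XX (τ i m) β (φ β)) +
        (∑ s ∈ Finset.Ico β m, p i m (XX (τ i m) (s + 1) (q s)) +
         ∑ s ∈ Finset.Ico β m, p i m (XX (τ i m) (s + 1) (W s))) +
        (if τ i m < β then p i m (φ (τ i m)) else 0) := by
      intro i
      obtain ⟨huα, hum⟩ := hτ i m hmI
      by_cases huβ : τ i m < β
      · have hx0 : x (τ i m) = φ (τ i m) := hxφ _ ⟨huα, by omega⟩
        have h1 : XX (τ i m) β = 0 := hXX0 β ⟨le_rfl, hβγ⟩ _ ⟨huα, huβ⟩
        have h2 : ∀ s ∈ Finset.Ico β m, XX (τ i m) (s + 1) = 0 := fun s hs => by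
          simp only [Finset.mem_Ico] at hs
          exact hXX0 (s + 1) ⟨by omega, by omega⟩ _ ⟨huα, by omega⟩
        have hz1 : ∑ s ∈ Finset.Ico β m, p i m (XX (τ i m) (s + 1) (q s)) = 0 :=
          Finset.sum_eq_zero fun s hs => by rw [h2 s hs]; simp
        have hz2 : ∑ s ∈ Finset.Ico β m, p i m (XX (τ i m) (s + 1) (W s)) = 0 :=
          Finset.sum_eq_zero fun s hs => by rw [h2 s hs]; simp
        rw [if_pos huβ, hx0, h1, hz1, hz2]
        simp
      · push_neg at huβ
        have hxu := IH hmγ' (τ i m) huβ hum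
        have h2 : ∀ s ∈ Finset.Ico (τ i m) m, XX (τ i m) (s + 1) = 0 := fun s hs => by
          simp only [Finset.mem_Ico] at hs
          exact hXX0 (s + 1) ⟨by omega, by omega⟩ _ ⟨huα, by omega⟩
        have hsplit : ∀ g : ℤ → X,
            ∑ s ∈ Finset.Ico β m, p i m (XX (τ i m) (s + 1) (g s)) =
            ∑ s ∈ Finset.Ico β (τ i m), p i m (XX (τ i m) (s + 1) (g s)) := by
          intro g
          rw [← Finset.Ico_union_Ico_eq_Ico huβ hum,
            Finset.sum_union (Finset.Ico_disjoint_Ico_consecutive β (τ i m) m)]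
          have hz : ∑ s ∈ Finset.Ico (τ i m) m, p i m (XX (τ i m) (s + 1) (g s)) = 0 :=
            Finset.sum_eq_zero fun s hs => by rw [h2 s hs]; simp
          rw [hz, add_zero]
        rw [if_neg (not_lt.2 huβ), add_zero, hsplit, hsplit, hxu]
        simp [map_add, map_sum, add_assoc]
    -- recurrence for the principal solutions appearing in the sums
    have hrec : ∀ s ∈ Finset.Ico β m,
        XX (m + 1) (s + 1) = XX m (s + 1) + ∑ i, (p i m).comp (XX (τ i m) (s + 1)) :=
      fun s hs => by
        simp only [Finset.mem_Ico] at hs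
        exact hXXrec (s + 1) ⟨by omega, by omega⟩ m ⟨by omega, by omega⟩
    have hrecβ : XX (m + 1) β = XX m β + ∑ i, (p i m).comp (XX (τ i m) β) :=
      hXXrec β ⟨le_rfl, hβγ⟩ m ⟨hβm, by omega⟩
    have hid : XX (m + 1) (m + 1) = ContinuousLinearMap.id ℝ X :=
      hXXinit (m + 1) ⟨by omega, hmγ⟩
    -- expand the right-hand side
    have hexp : ∀ g : ℤ → X,
        ∑ s ∈ Finset.Ico β (m + 1), XX (m + 1) (s + 1) (g s) =
        (∑ s ∈ Finset.Ico β m, XX m (s + 1) (g s) +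
         ∑ i, ∑ s ∈ Finset.Ico β m, p i m (XX (τ i m) (s + 1) (g s))) + g m := by
      intro g
      have hins : Finset.Ico β (m + 1) = insert m (Finset.Ico β m) := by
        ext s
        simp only [Finset.mem_Ico, Finset.mem_insert]
        omega
      rw [hins, Finset.sum_insert (by simp), hid]
      have h1 : ∑ s ∈ Finset.Ico β m, XX (m + 1) (s + 1) (g s) =
          ∑ s ∈ Finset.Ico β m,
            (XX m (s + 1) (g s) + ∑ i, p i m (XX (τ i m) (s + 1) (g s))) :=
        Finset.sum_congr rfl fun s hs => by
          rw [hrec s hs]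
          simp [ContinuousLinearMap.add_apply, ContinuousLinearMap.sum_apply,
            ContinuousLinearMap.comp_apply]
      rw [h1, Finset.sum_add_distrib, Finset.sum_comm]
      simp only [ContinuousLinearMap.id_apply]
      abel
    rw [hstep, IH hmγ' m hβm le_rfl, hexp, hexp, hrecβ,
        Finset.sum_congr rfl fun i (_ : i ∈ Finset.univ) => key i]
    simp only [ContinuousLinearMap.add_apply, ContinuousLinearMap.sum_apply,
      ContinuousLinearMap.comp_apply, Finset.sum_add_distrib]
    have hWm : ∑ i : Fin n, (if τ i m < β then p i m (φ (τ i m)) else 0) = W m := rfl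
    rw [hWm]
    abel
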